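/- Let μ be a probability measure on ℝ^d that is absolutely continuous with respect to Lebesgue measure and has bounded support, let r > 0 and s > 0, and let X_1, X_2, … be i.i.d. with law μ. Then there is a constant C > 0 such that for all n ≥ 2, E[ sup_{z ∈ supp(μ)} |SD^r_s(z | X_{1:n}) − SD^r_s(z | μ)| ] ≤ C · log(n) / √n. -/

import Mathlib

open MeasureTheory

/-- The sigmoid function with scale `s`. -/
noncomputable def sig (s t : ℝ) : ℝ := 1 / (1 + Real.exp (-t / s))

/-- The (smoothed, `s > 0`) sphere depth
`SD^r_s(z|μ) = inf_{‖c−z‖=r} ∫ sig_s(r² − ‖x − c‖²) dμ(x)`. -/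
noncomputable def SDs (d : ℕ) (r s : ℝ) (z : EuclideanSpace ℝ (Fin d))
    (μ : Measure (EuclideanSpace ℝ (Fin d))) : ℝ :=
  ⨅ c : Metric.sphere z r, ∫ x, sig s (r ^ 2 - ‖x - (c : EuclideanSpace ℝ (Fin d))‖ ^ 2) ∂μ

/-- The sphere depth of the empirical measure of the samples `x₁,…,xₙ`:
`SD^r_s(z|x_{1:n}) = inf_{‖c−z‖=r} (1/n) Σᵢ sig_s(r² − ‖xᵢ − c‖²)`. -/
noncomputable def SDemp (d : ℕ) (r s : ℝ) (z : EuclideanSpace ℝ (Fin d)) (n : ℕ)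
    (x : Fin n → EuclideanSpace ℝ (Fin d)) : ℝ :=
  ⨅ c : Metric.sphere z r,
    (n : ℝ)⁻¹ * ∑ i, sig s (r ^ 2 - ‖x i - (c : EuclideanSpace ℝ (Fin d))‖ ^ 2)

/-- The (topological) support of a measure: points all of whose neighborhoods have
positive measure. -/
def msupport {E : Type*} [TopologicalSpace E] [MeasurableSpace E] (μ : Measure E) : Set E :=
  {x | ∀ U ∈ nhds x, μ U ≠ 0}


section SD_aux
open MeasureTheory Real ProbabilityTheory

lemma sig_nonneg (s t : ℝ) : 0 ≤ sig s t := by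
  unfold sig; positivity

lemma sig_le_one (s t : ℝ) : sig s t ≤ 1 := by
  unfold sig
  rw [div_le_one (by positivity)]
  nlinarith [Real.exp_pos (-t/s)]

lemma sig_sub_le (hs : 0 < s) (a b : ℝ) : sig s a - sig s b ≤ |a - b| / s := by
  set A := Real.exp (-a/s) with hA
  set B := Real.exp (-b/s) with hB
  have hApos : 0 < A := Real.exp_pos _
  have hBpos : 0 < B := Real.exp_pos _
  have key : sig s a - sig s b = (B - A) / ((1+A)*(1+B)) := by
    unfold sig
    field_simp
    simp only [hA, hB, neg_div]; ring
  have hBA : B - A ≤ B * ((a-b)/s) := by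
    have h1 : A = B * Real.exp ((b-a)/s) := by
      rw [hA, hB, ← Real.exp_add]; ring_nf
    have h2 : 1 + (b-a)/s ≤ Real.exp ((b-a)/s) := by linarith [Real.add_one_le_exp ((b-a)/s)]
    calc B - A = B * (1 - Real.exp ((b-a)/s)) := by rw [h1]; ring
    _ ≤ B * (-( (b-a)/s)) := by
        apply mul_le_mul_of_nonneg_left _ hBpos.le
        linarith
    _ = B * ((a-b)/s) := by ring
  rw [key]
  rcases le_or_gt (a - b) 0 with h | h
  · have : B - A ≤ 0 := by
      refine hBA.trans ?_
      apply mul_nonpos_of_nonneg_of_nonpos hBpos.le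
      exact div_nonpos_of_nonpos_of_nonneg h hs.le
    have : (B - A) / ((1+A)*(1+B)) ≤ 0 := div_nonpos_of_nonpos_of_nonneg this (by positivity)
    refine this.trans (by positivity)
  · have habs : |a - b| = a - b := abs_of_pos h
    rw [habs, div_le_div_iff₀ (by positivity) hs]
    have hden : B ≤ (1+A)*(1+B) := by nlinarith
    calc (B - A) * s ≤ B * ((a-b)/s) * s := by nlinarith
    _ = B * (a - b) := by field_simp
    _ ≤ (1+A)*(1+B) * (a-b) := by nlinarith
    _ = (a-b) * ((1+A)*(1+B)) := by ring

lemma sig_lip (hs : 0 < s) (a b : ℝ) : |sig s a - sig s b| ≤ |a - b| / s := by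
  rw [abs_sub_le_iff]
  constructor
  · exact sig_sub_le hs a b
  · rw [abs_sub_comm]; exact sig_sub_le hs b a

lemma exp_le_one_add_self_add_sq {x : ℝ} (h : |x| ≤ 1) : Real.exp x ≤ 1 + x + x^2 := by
  have hb := Real.exp_bound h (n := 3) (by norm_num)
  have h1 : ∑ m ∈ Finset.range 3, x ^ m / m.factorial = 1 + x + x^2/2 := by
    simp [Finset.sum_range_succ, Nat.factorial]
  rw [h1] at hb
  have h2 : |x|^3 ≤ x^2 := by
    have : |x|^3 = |x|^2 * |x| := by ring
    rw [this, sq_abs]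
    nlinarith [sq_nonneg x, abs_nonneg x]
  have h3 : Real.exp x - (1 + x + x^2/2) ≤ |x|^3 * ((3:ℕ).succ / ((3:ℕ).factorial * 3)) :=
    (abs_sub_le_iff.mp hb).1
  have : ((3:ℕ).succ : ℝ) / ((3:ℕ).factorial * 3) = 2/9 := by norm_num [Nat.factorial]
  rw [this] at h3
  nlinarith

lemma ciInf_sub_ciInf_le {ι : Type*} [Nonempty ι] {F G : ι → ℝ} {M : ℝ}
    (hF : ∀ i, 0 ≤ F i) (h : ∀ i, F i - G i ≤ M) :
    (⨅ i, F i) - ⨅ i, G i ≤ M := by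
  have hbF : BddBelow (Set.range F) := ⟨0, by rintro x ⟨i, rfl⟩; exact hF i⟩
  have key : ∀ i, (⨅ j, F j) - M ≤ G i := fun i => by linarith [ciInf_le hbF i, h i]
  linarith [le_ciInf key]

lemma abs_ciInf_sub_ciInf {ι : Type*} [Nonempty ι] {F G : ι → ℝ} {M : ℝ}
    (hF : ∀ i, 0 ≤ F i) (hG : ∀ i, 0 ≤ G i) (h : ∀ i, |F i - G i| ≤ M) :
    |(⨅ i, F i) - ⨅ i, G i| ≤ M := by
  rw [abs_sub_le_iff]
  exact ⟨ciInf_sub_ciInf_le hF fun i => (abs_sub_le_iff.mp (h i)).1,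
    ciInf_sub_ciInf_le hG fun i => (abs_sub_le_iff.mp (h i)).2⟩

lemma msupport_compl_null {E : Type*} [TopologicalSpace E] [MeasurableSpace E]
    [SecondCountableTopology E] (μ : Measure E) :
    μ (msupport μ)ᶜ = 0 := by
  apply measure_null_of_locally_null
  intro x hx
  simp only [msupport, Set.mem_compl_iff, Set.mem_setOf_eq, not_forall] at hx
  obtain ⟨U, hU, hU0⟩ := hx
  push_neg at hU0
  exact ⟨U, mem_nhdsWithin_of_mem_nhds hU, hU0⟩

lemma f_lip {d : ℕ} {s r : ℝ} (hs : 0 < s) (x c c' : EuclideanSpace ℝ (Fin d))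
    {K R : ℝ} (hx : ‖x‖ ≤ K) (hc : ‖c‖ ≤ R) (hc' : ‖c'‖ ≤ R) :
    |sig s (r^2 - ‖x - c‖^2) - sig s (r^2 - ‖x - c'‖^2)| ≤ (2*(K+R)/s) * ‖c - c'‖ := by
  have hK : 0 ≤ K := (norm_nonneg x).trans hx
  have hR : 0 ≤ R := (norm_nonneg c).trans hc
  refine (sig_lip hs _ _).trans ?_
  have e0 : (r^2 - ‖x - c‖^2) - (r^2 - ‖x - c'‖^2)
      = (‖x - c'‖ - ‖x - c‖) * (‖x - c'‖ + ‖x - c‖) := by ring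
  have e1 : |‖x - c'‖ - ‖x - c‖| ≤ ‖c - c'‖ := by
    have h2 := abs_norm_sub_norm_le (x - c') (x - c)
    have h3 : (x - c') - (x - c) = c - c' := by abel
    rwa [h3] at h2
  have hxc : ‖x - c‖ ≤ K + R := (norm_sub_le _ _).trans (by linarith)
  have hxc' : ‖x - c'‖ ≤ K + R := (norm_sub_le _ _).trans (by linarith)
  have e2 : |‖x - c'‖ + ‖x - c‖| ≤ 2*(K+R) := by
    rw [abs_of_nonneg (by positivity)]; linarith
  rw [e0, abs_mul, div_le_iff₀ hs]
  have : |‖x - c'‖ - ‖x - c‖| * |‖x - c'‖ + ‖x - c‖| ≤ ‖c - c'‖ * (2*(K+R)) :=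
    mul_le_mul e1 e2 (abs_nonneg _) (norm_nonneg _)
  calc |‖x - c'‖ - ‖x - c‖| * |‖x - c'‖ + ‖x - c‖| ≤ ‖c - c'‖ * (2*(K+R)) := this
  _ = 2*(K+R)/s * ‖c - c'‖ * s := by field_simp

variable {Ω : Type*} [MeasurableSpace Ω] {P : Measure Ω} [IsProbabilityMeasure P]

lemma integrable_of_abs_le {f : Ω → ℝ} (hf : Measurable f) {C : ℝ} (h : ∀ ω, |f ω| ≤ C) :
    Integrable f P :=
  (integrable_const C).mono' hf.aestronglyMeasurable (Filter.Eventually.of_forall h)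

lemma mgf_le_of_bounded {Z : Ω → ℝ} (hmeas : Measurable Z)
    (hbd : ∀ ω, |Z ω| ≤ 1) (hmean : ∫ ω, Z ω ∂P = 0)
    {l : ℝ} (hl0 : 0 ≤ l) (hl1 : l ≤ 1) : mgf Z P l ≤ Real.exp (l^2) := by
  have hZint : Integrable Z P := integrable_of_abs_le hmeas (C := 1) hbd
  have hZ2int : Integrable (fun ω => (Z ω)^2) P := by
    refine integrable_of_abs_le (hmeas.pow_const 2) (C := 1) fun ω => ?_
    rw [abs_pow]
    calc |Z ω|^2 ≤ 1^2 := pow_le_pow_left₀ (abs_nonneg _) (hbd ω) 2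
    _ = 1 := one_pow 2
  have hpt : ∀ ω, Real.exp (l * Z ω) ≤ 1 + l * Z ω + l^2 * (Z ω)^2 := by
    intro ω
    have h1 : |l * Z ω| ≤ 1 := by
      rw [abs_mul]
      calc |l| * |Z ω| ≤ 1 * 1 := by
            apply mul_le_mul _ (hbd ω) (abs_nonneg _) zero_le_one
            rw [abs_of_nonneg hl0]; exact hl1
      _ = 1 := one_mul 1
    have := exp_le_one_add_self_add_sq h1
    calc Real.exp (l * Z ω) ≤ 1 + l * Z ω + (l * Z ω)^2 := this
    _ = 1 + l * Z ω + l^2 * (Z ω)^2 := by ring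
  have hexp_int : Integrable (fun ω => Real.exp (l * Z ω)) P := by
    refine ((integrable_const (Real.exp 1)).mono' ((hmeas.const_mul l).exp).aestronglyMeasurable
      (Filter.Eventually.of_forall fun ω => ?_))
    rw [Real.norm_eq_abs, abs_of_pos (Real.exp_pos _)]
    apply Real.exp_le_exp.mpr
    calc l * Z ω ≤ |l * Z ω| := le_abs_self _
    _ ≤ 1 := by
        rw [abs_mul]
        calc |l| * |Z ω| ≤ 1 * 1 :=
              mul_le_mul (by rw [abs_of_nonneg hl0]; exact hl1) (hbd ω) (abs_nonneg _) zero_le_one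
        _ = 1 := one_mul 1
  have hRint : Integrable (fun ω => 1 + l * Z ω + l^2 * (Z ω)^2) P :=
    ((integrable_const 1).add (hZint.const_mul l)).add (hZ2int.const_mul (l^2))
  have step1 : mgf Z P l ≤ ∫ ω, (1 + l * Z ω + l^2 * (Z ω)^2) ∂P :=
    integral_mono hexp_int hRint hpt
  have step2 : ∫ ω, (1 + l * Z ω + l^2 * (Z ω)^2) ∂P = 1 + l^2 * ∫ ω, (Z ω)^2 ∂P := by
    have h1 : Integrable (fun ω => 1 + l * Z ω) P := (integrable_const 1).add (hZint.const_mul l)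
    have h2 : Integrable (fun ω => l^2 * (Z ω)^2) P := hZ2int.const_mul (l^2)
    have h3 : Integrable (fun ω => l * Z ω) P := hZint.const_mul l
    rw [integral_add h1 h2]
    rw [integral_add (integrable_const 1) h3]
    rw [integral_const_mul, integral_const_mul, hmean, integral_const]
    simp
  have step3 : ∫ ω, (Z ω)^2 ∂P ≤ 1 := by
    calc ∫ ω, (Z ω)^2 ∂P ≤ ∫ _ω, (1:ℝ) ∂P := by
          refine integral_mono hZ2int (integrable_const 1) fun ω => ?_
          have := hbd ω
          nlinarith [abs_nonneg (Z ω), sq_abs (Z ω)]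
    _ = 1 := by simp
  have : mgf Z P l ≤ 1 + l^2 := by
    rw [step2] at step1
    nlinarith [sq_nonneg l]
  refine this.trans ?_
  linarith [Real.add_one_le_exp (l^2)]

lemma hoeffding_one_side (Z : ℕ → Ω → ℝ) (hmeas : ∀ i, Measurable (Z i))
    (hindep : iIndepFun Z P)
    (hbd : ∀ i ω, |Z i ω| ≤ 1) (hmean : ∀ i, ∫ ω, Z i ω ∂P = 0)
    (n : ℕ) {t : ℝ} (ht0 : 0 ≤ t) (ht1 : t ≤ 1) :
    (P {ω | (n:ℝ) * t ≤ ∑ i ∈ Finset.range n, Z i ω}).toReal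
      ≤ Real.exp (-(n:ℝ) * t^2 / 4) := by
  set l : ℝ := t/2 with hl
  have hl0 : 0 ≤ l := by positivity
  have hl1 : l ≤ 1 := by rw [hl]; linarith
  have hsum_meas : Measurable (fun ω => ∑ i ∈ Finset.range n, Z i ω) := by
    apply Finset.measurable_sum
    exact fun i _ => hmeas i
  have hint : Integrable (fun ω => Real.exp (l * (∑ i ∈ Finset.range n, Z i ω))) P := by
    refine (integrable_const (Real.exp ((n:ℝ)))).mono'
      ((hsum_meas.const_mul l).exp).aestronglyMeasurable (Filter.Eventually.of_forall fun ω => ?_)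
    rw [Real.norm_eq_abs, abs_of_pos (Real.exp_pos _)]
    apply Real.exp_le_exp.mpr
    calc l * ∑ i ∈ Finset.range n, Z i ω ≤ |l| * |∑ i ∈ Finset.range n, Z i ω| := by
          rw [← abs_mul]; exact le_abs_self _
    _ ≤ 1 * (n:ℝ) := by
        apply mul_le_mul _ _ (abs_nonneg _) zero_le_one
        · rw [abs_of_nonneg hl0]; exact hl1
        · calc |∑ i ∈ Finset.range n, Z i ω| ≤ ∑ i ∈ Finset.range n, |Z i ω| :=
                Finset.abs_sum_le_sum_abs _ _
          _ ≤ ∑ _i ∈ Finset.range n, (1:ℝ) := Finset.sum_le_sum fun i _ => hbd i ω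
          _ = (n:ℝ) := by simp
    _ = (n:ℝ) := one_mul _
  have chern := measure_ge_le_exp_mul_mgf (X := fun ω => ∑ i ∈ Finset.range n, Z i ω)
    (μ := P) ((n:ℝ) * t) hl0 hint
  have hmgf_sum : mgf (fun ω => ∑ i ∈ Finset.range n, Z i ω) P l
      = ∏ i ∈ Finset.range n, mgf (Z i) P l := by
    have hfe : (fun ω => ∑ i ∈ Finset.range n, Z i ω) = ∑ i ∈ Finset.range n, Z i := by
      funext ω; simp
    rw [hfe]
    exact hindep.mgf_sum (t := l) hmeas (Finset.range n)
  have hprod : ∏ i ∈ Finset.range n, mgf (Z i) P l ≤ Real.exp ((n:ℝ) * l^2) := by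
    calc ∏ i ∈ Finset.range n, mgf (Z i) P l ≤ ∏ _i ∈ Finset.range n, Real.exp (l^2) := by
          apply Finset.prod_le_prod (fun i _ => mgf_nonneg)
          exact fun i _ => mgf_le_of_bounded (hmeas i) (hbd i) (hmean i) hl0 hl1
    _ = Real.exp ((n:ℝ) * l^2) := by rw [Finset.prod_const, ← Real.exp_nat_mul]; norm_num
  calc (P {ω | (n:ℝ) * t ≤ ∑ i ∈ Finset.range n, Z i ω}).toReal
      ≤ Real.exp (-l * ((n:ℝ)*t)) * mgf (fun ω => ∑ i ∈ Finset.range n, Z i ω) P l := chern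
  _ ≤ Real.exp (-l * ((n:ℝ)*t)) * Real.exp ((n:ℝ) * l^2) := by
      rw [hmgf_sum]
      exact mul_le_mul_of_nonneg_left hprod (Real.exp_pos _).le
  _ = Real.exp (-(n:ℝ) * t^2 / 4) := by
      rw [← Real.exp_add]
      congr 1
      rw [hl]; ring

variable {Ω : Type*} [MeasurableSpace Ω] {P : Measure Ω} [IsProbabilityMeasure P]

lemma hoeffding_abs (Z : ℕ → Ω → ℝ) (hmeas : ∀ i, Measurable (Z i))
    (hindep : iIndepFun Z P)
    (hbd : ∀ i ω, |Z i ω| ≤ 1) (hmean : ∀ i, ∫ ω, Z i ω ∂P = 0)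
    (n : ℕ) {t : ℝ} (ht0 : 0 ≤ t) (ht1 : t ≤ 1) :
    (P {ω | (n:ℝ) * t ≤ |∑ i ∈ Finset.range n, Z i ω|}).toReal
      ≤ 2 * Real.exp (-(n:ℝ) * t^2 / 4) := by
  have hindep' : iIndepFun (fun i => fun ω => -(Z i ω)) P := by
    have := hindep.comp (fun _ => (fun x : ℝ => -x)) (fun _ => measurable_neg)
    exact this
  have h1 := hoeffding_one_side Z hmeas hindep hbd hmean n ht0 ht1
  have h2 := hoeffding_one_side (fun i => fun ω => -(Z i ω)) (fun i => (hmeas i).neg) hindep'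
    (fun i ω => by rw [abs_neg]; exact hbd i ω)
    (fun i => by rw [integral_neg, hmean i, neg_zero]) n ht0 ht1
  have hsub : {ω | (n:ℝ) * t ≤ |∑ i ∈ Finset.range n, Z i ω|}
      ⊆ {ω | (n:ℝ) * t ≤ ∑ i ∈ Finset.range n, Z i ω}
        ∪ {ω | (n:ℝ) * t ≤ ∑ i ∈ Finset.range n, -(Z i ω)} := by
    intro ω hω
    simp only [Set.mem_setOf_eq] at hω
    rcases le_abs.mp hω with h | h
    · exact Or.inl h
    · right
      simpa [Finset.sum_neg_distrib] using h
  have hne1 : P {ω | (n:ℝ) * t ≤ ∑ i ∈ Finset.range n, Z i ω} ≠ ⊤ := measure_ne_top _ _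
  have hne2 : P {ω | (n:ℝ) * t ≤ ∑ i ∈ Finset.range n, -(Z i ω)} ≠ ⊤ := measure_ne_top _ _
  calc (P {ω | (n:ℝ) * t ≤ |∑ i ∈ Finset.range n, Z i ω|}).toReal
      ≤ (P {ω | (n:ℝ) * t ≤ ∑ i ∈ Finset.range n, Z i ω}
          + P {ω | (n:ℝ) * t ≤ ∑ i ∈ Finset.range n, -(Z i ω)}).toReal := by
        apply ENNReal.toReal_mono (by finiteness)
        exact (measure_mono hsub).trans (measure_union_le _ _)
  _ = (P {ω | (n:ℝ) * t ≤ ∑ i ∈ Finset.range n, Z i ω}).toReal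
      + (P {ω | (n:ℝ) * t ≤ ∑ i ∈ Finset.range n, -(Z i ω)}).toReal :=
        ENNReal.toReal_add hne1 hne2
  _ ≤ Real.exp (-(n:ℝ) * t^2 / 4) + Real.exp (-(n:ℝ) * t^2 / 4) := add_le_add h1 h2
  _ = 2 * Real.exp (-(n:ℝ) * t^2 / 4) := by ring

lemma net_exists (d : ℕ) (hd : 0 < d) {R ε : ℝ} (hR : 0 < R) (hε : 0 < ε) :
    ∃ T : Finset (EuclideanSpace ℝ (Fin d)),
      (∀ c : EuclideanSpace ℝ (Fin d), ‖c‖ ≤ R → ∃ p ∈ T, ‖c - p‖ ≤ ε) ∧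
      (T.card : ℝ) ≤ (2*R*Real.sqrt d/ε + 5)^d := by
  have hsd : 0 < Real.sqrt d := Real.sqrt_pos.mpr (by exact_mod_cast hd)
  set δ : ℝ := ε / Real.sqrt d with hδdef
  have hδ : 0 < δ := by positivity
  set M : ℕ := ⌈R/δ⌉₊ + 1 with hM
  classical
  let q : (Fin d → ℤ) → EuclideanSpace ℝ (Fin d) := fun k => WithLp.toLp 2 (fun i => (k i : ℝ) * δ)
  refine ⟨(Fintype.piFinset (fun _ : Fin d => Finset.Icc (-(M:ℤ)) (M:ℤ))).image q, ?_, ?_⟩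
  · intro c hc
    have hcoord : ∀ i, |c i| ≤ R := by
      intro i
      have h1 : |c i| ≤ ‖c‖ := by
        rw [EuclideanSpace.norm_eq]
        have : |c i| = Real.sqrt (‖c i‖^2) := by
          rw [Real.sqrt_sq_eq_abs, Real.norm_eq_abs, abs_abs]
        rw [this]
        apply Real.sqrt_le_sqrt
        exact Finset.single_le_sum (f := fun j => ‖c j‖^2) (fun j _ => by positivity)
          (Finset.mem_univ i)
      exact h1.trans hc
    set k : Fin d → ℤ := fun i => ⌊c i / δ⌋ with hk
    have hkmem : k ∈ Fintype.piFinset (fun _ : Fin d => Finset.Icc (-(M:ℤ)) (M:ℤ)) := by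
      rw [Fintype.mem_piFinset]
      intro i
      rw [Finset.mem_Icc]
      have hRδM : R/δ + 1 ≤ (M:ℝ) := by
        rw [hM]
        push_cast
        linarith [Nat.le_ceil (R/δ)]
      have hci := abs_le.mp (hcoord i)
      have hup : c i / δ ≤ R / δ := by gcongr; exact hci.2
      have hlow' : (-R) / δ ≤ c i / δ := by gcongr; exact hci.1
      have hlow : -(R/δ) ≤ c i / δ := by rwa [neg_div] at hlow'
      have hfl : (k i : ℝ) ≤ c i / δ := Int.floor_le _
      have hfl2 : c i / δ - 1 < (k i : ℝ) := by
        rw [hk]; exact_mod_cast Int.sub_one_lt_floor (c i / δ)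
      constructor
      · exact_mod_cast show (-(M:ℝ)) ≤ (k i : ℝ) by linarith
      · exact_mod_cast show ((k i : ℝ)) ≤ (M:ℝ) by linarith
    refine ⟨q k, Finset.mem_image_of_mem q hkmem, ?_⟩
    have hcomp : ∀ i, |c i - (k i : ℝ) * δ| ≤ δ := by
      intro i
      have h1 : (k i : ℝ) ≤ c i / δ := Int.floor_le _
      have h2 : c i / δ - 1 < (k i : ℝ) := by exact_mod_cast Int.sub_one_lt_floor (c i / δ)
      have h1' : (k i : ℝ) * δ ≤ c i := by
        rw [← le_div_iff₀ hδ]; exact h1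
      have h2' : c i < ((k i : ℝ) + 1) * δ := by
        rw [← div_lt_iff₀ hδ]; linarith
      rw [abs_le]
      constructor
      · nlinarith
      · nlinarith
    have : ‖c - q k‖ ≤ Real.sqrt (d * δ^2) := by
      rw [EuclideanSpace.norm_eq]
      apply Real.sqrt_le_sqrt
      have hterm : ∀ i : Fin d, ‖(c - q k) i‖^2 ≤ δ^2 := by
        intro i
        have he : (c - q k) i = c i - (k i : ℝ) * δ := rfl
        rw [he, Real.norm_eq_abs]
        have := hcomp i
        nlinarith [abs_nonneg (c i - (k i:ℝ)*δ)]
      calc ∑ i, ‖(c - q k) i‖^2 ≤ ∑ _i : Fin d, δ^2 :=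
            Finset.sum_le_sum fun i _ => hterm i
      _ = d * δ^2 := by rw [Finset.sum_const, Finset.card_univ, Fintype.card_fin]; ring
    refine this.trans ?_
    rw [Real.sqrt_mul (by positivity), Real.sqrt_sq hδ.le]
    rw [hδdef]
    field_simp
    norm_num
  · calc ((Finset.image q (Fintype.piFinset fun _ => Finset.Icc (-(M:ℤ)) (M:ℤ))).card : ℝ)
        ≤ ((Fintype.piFinset fun _ : Fin d => Finset.Icc (-(M:ℤ)) (M:ℤ)).card : ℝ) := by
          exact_mod_cast Finset.card_image_le
    _ = ((2*M+1 : ℕ) : ℝ)^d := by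
        rw [Fintype.card_piFinset]
        simp only [Int.card_Icc]
        have : ((M:ℤ) + 1 - -(M:ℤ)).toNat = 2*M+1 := by omega
        rw [this, Finset.prod_const, Finset.card_univ, Fintype.card_fin]
        push_cast; ring
    _ ≤ (2*R*Real.sqrt d/ε + 5)^d := by
        apply pow_le_pow_left₀ (by positivity)
        have h1 : (⌈R/δ⌉₊ : ℝ) < R/δ + 1 := Nat.ceil_lt_add_one (by positivity)
        have h2 : R/δ = R*Real.sqrt d/ε := by rw [hδdef]; field_simp
        push_cast [hM]
        have h3 : 2 * R * Real.sqrt d / ε = 2 * (R/δ) := by rw [h2]; ring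
        rw [h3]
        linarith

noncomputable def fD (r s : ℝ) {d : ℕ} (c x : EuclideanSpace ℝ (Fin d)) : ℝ :=
  sig s (r ^ 2 - ‖x - c‖ ^ 2)

noncomputable def mD (r s : ℝ) {d : ℕ} (μ : Measure (EuclideanSpace ℝ (Fin d)))
    (c : EuclideanSpace ℝ (Fin d)) : ℝ := ∫ x, fD r s c x ∂μ

noncomputable def gnD (r s : ℝ) {d : ℕ} {Ω : Type*} (X : ℕ → Ω → EuclideanSpace ℝ (Fin d))
    (n : ℕ) (c : EuclideanSpace ℝ (Fin d)) (ω : Ω) : ℝ :=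
  (n : ℝ)⁻¹ * ∑ i ∈ Finset.range n, fD r s c (X i ω)

lemma sig_cont (s : ℝ) : Continuous (fun t => sig s t) := by
  unfold sig
  apply Continuous.div continuous_const
  · exact continuous_const.add (Real.continuous_exp.comp (continuous_id.neg.div_const s))
  · intro t; positivity

lemma fD_cont (r s : ℝ) {d : ℕ} (c : EuclideanSpace ℝ (Fin d)) :
    Continuous (fun x => fD r s c x) := by
  unfold fD
  exact (sig_cont s).comp
    (continuous_const.sub (((continuous_id.sub continuous_const).norm).pow 2))

lemma fD_nonneg (r s : ℝ) {d : ℕ} (c x : EuclideanSpace ℝ (Fin d)) : 0 ≤ fD r s c x :=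
  sig_nonneg _ _

lemma fD_le_one (r s : ℝ) {d : ℕ} (c x : EuclideanSpace ℝ (Fin d)) : fD r s c x ≤ 1 :=
  sig_le_one _ _

lemma fD_integrable (r s : ℝ) {d : ℕ} (μ : Measure (EuclideanSpace ℝ (Fin d)))
    [IsProbabilityMeasure μ] (c : EuclideanSpace ℝ (Fin d)) : Integrable (fD r s c) μ := by
  refine (integrable_const (1:ℝ)).mono' (fD_cont r s c).aestronglyMeasurable
    (Filter.Eventually.of_forall fun x => ?_)
  rw [Real.norm_eq_abs, abs_of_nonneg (fD_nonneg r s c x)]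
  exact fD_le_one r s c x

lemma mD_nonneg (r s : ℝ) {d : ℕ} (μ : Measure (EuclideanSpace ℝ (Fin d)))
    (c : EuclideanSpace ℝ (Fin d)) : 0 ≤ mD r s μ c :=
  integral_nonneg (fun x => fD_nonneg r s c x)

lemma mD_le_one (r s : ℝ) {d : ℕ} (μ : Measure (EuclideanSpace ℝ (Fin d)))
    [IsProbabilityMeasure μ] (c : EuclideanSpace ℝ (Fin d)) : mD r s μ c ≤ 1 := by
  unfold mD
  calc ∫ x, fD r s c x ∂μ ≤ ∫ _x, (1:ℝ) ∂μ :=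
        integral_mono (fD_integrable r s μ c) (integrable_const 1) (fD_le_one r s c)
  _ = 1 := by simp

lemma gnD_nonneg (r s : ℝ) {d : ℕ} {Ω : Type*} (X : ℕ → Ω → EuclideanSpace ℝ (Fin d))
    (n : ℕ) (c : EuclideanSpace ℝ (Fin d)) (ω : Ω) : 0 ≤ gnD r s X n c ω := by
  unfold gnD
  apply mul_nonneg (by positivity)
  exact Finset.sum_nonneg fun i _ => fD_nonneg r s c _

lemma gnD_le_one (r s : ℝ) {d : ℕ} {Ω : Type*} (X : ℕ → Ω → EuclideanSpace ℝ (Fin d))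
    (n : ℕ) (c : EuclideanSpace ℝ (Fin d)) (ω : Ω) : gnD r s X n c ω ≤ 1 := by
  unfold gnD
  rcases Nat.eq_zero_or_pos n with h | h
  · simp [h]
  · have hn : (0:ℝ) < n := by exact_mod_cast h
    rw [inv_mul_le_iff₀ hn, mul_one]
    calc ∑ i ∈ Finset.range n, fD r s c (X i ω) ≤ ∑ _i ∈ Finset.range n, (1:ℝ) :=
          Finset.sum_le_sum fun i _ => fD_le_one r s c _
    _ = n := by simp

lemma gnD_meas (r s : ℝ) {d : ℕ} {Ω : Type*} [MeasurableSpace Ω]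
    (X : ℕ → Ω → EuclideanSpace ℝ (Fin d)) (hX : ∀ i, Measurable (X i))
    (n : ℕ) (c : EuclideanSpace ℝ (Fin d)) : Measurable (gnD r s X n c) := by
  unfold gnD
  apply Measurable.const_mul
  exact Finset.measurable_sum _ fun i _ => ((fD_cont r s c).measurable).comp (hX i)

lemma abs_gnD_sub_mD_le_one (r s : ℝ) {d : ℕ} {Ω : Type*}
    (X : ℕ → Ω → EuclideanSpace ℝ (Fin d)) (μ : Measure (EuclideanSpace ℝ (Fin d)))
    [IsProbabilityMeasure μ] (n : ℕ) (c : EuclideanSpace ℝ (Fin d)) (ω : Ω) :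
    |gnD r s X n c ω - mD r s μ c| ≤ 1 := by
  rw [abs_le]
  constructor
  · linarith [gnD_nonneg r s X n c ω, mD_le_one r s μ c]
  · linarith [gnD_le_one r s X n c ω, mD_nonneg r s μ c]

lemma SDemp_eq (d : ℕ) (r s : ℝ) (z : EuclideanSpace ℝ (Fin d)) (n : ℕ)
    {Ω : Type*} (X : ℕ → Ω → EuclideanSpace ℝ (Fin d)) (ω : Ω) :
    SDemp d r s z n (fun i : Fin n => X i ω)
      = ⨅ c : Metric.sphere z r, gnD r s X n (↑c) ω := by
  unfold SDemp gnD fD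
  apply iInf_congr
  intro c
  congr 1
  exact Fin.sum_univ_eq_sum_range (fun i => sig s (r ^ 2 - ‖X i ω - (c : EuclideanSpace ℝ (Fin d))‖ ^ 2)) n

lemma SDs_eq (d : ℕ) (r s : ℝ) (z : EuclideanSpace ℝ (Fin d))
    (μ : Measure (EuclideanSpace ℝ (Fin d))) :
    SDs d r s z μ = ⨅ c : Metric.sphere z r, mD r s μ (↑c) := rfl

lemma sphere_nonempty_of_dim_pos {d : ℕ} (hd : 0 < d) {r : ℝ} (hr : 0 < r)
    (z : EuclideanSpace ℝ (Fin d)) : Nonempty (Metric.sphere z r) := by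
  refine ⟨⟨z + r • EuclideanSpace.single ⟨0, hd⟩ (1:ℝ), ?_⟩⟩
  rw [Metric.mem_sphere, dist_eq_norm]
  have : z + r • EuclideanSpace.single ⟨0, hd⟩ (1:ℝ) - z = r • EuclideanSpace.single ⟨0, hd⟩ (1:ℝ) := by abel
  rw [this, norm_smul, EuclideanSpace.norm_single]
  simp [abs_of_pos hr]

lemma msupport_isOpen_compl {E : Type*} [TopologicalSpace E] [MeasurableSpace E]
    (μ : Measure E) : IsOpen (msupport μ)ᶜ := by
  rw [isOpen_iff_mem_nhds]
  intro x hx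
  simp only [msupport, Set.mem_compl_iff, Set.mem_setOf_eq, not_forall] at hx
  obtain ⟨U, hU, hU0⟩ := hx
  push_neg at hU0
  rw [mem_nhds_iff]
  refine ⟨interior U, ?_, isOpen_interior, mem_interior_iff_mem_nhds.mpr hU⟩
  intro y hy
  simp only [msupport, Set.mem_compl_iff, Set.mem_setOf_eq, not_forall]
  refine ⟨U, mem_nhds_iff.mpr ⟨interior U, interior_subset, isOpen_interior, hy⟩, by simp [hU0]⟩

lemma mD_lip {d : ℕ} {r s : ℝ} (hs : 0 < s) (μ : Measure (EuclideanSpace ℝ (Fin d)))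
    [IsProbabilityMeasure μ] {K R : ℝ} (hbd : ∀ x ∈ msupport μ, ‖x‖ ≤ K)
    (c p : EuclideanSpace ℝ (Fin d)) (hc : ‖c‖ ≤ R) (hp : ‖p‖ ≤ R) :
    |mD r s μ c - mD r s μ p| ≤ (2*(K+R)/s) * ‖c - p‖ := by
  have hsub : mD r s μ c - mD r s μ p = ∫ x, (fD r s c x - fD r s p x) ∂μ :=
    (integral_sub (fD_integrable r s μ c) (fD_integrable r s μ p)).symm
  have hae : ∀ᵐ x ∂μ, x ∈ msupport μ := by
    have h0 := msupport_compl_null μ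
    rw [ae_iff]
    exact h0
  rw [← Real.norm_eq_abs, hsub]
  have := norm_integral_le_of_norm_le_const (μ := μ)
    (f := fun x => fD r s c x - fD r s p x) (C := (2*(K+R)/s) * ‖c - p‖) ?_
  · simpa using this
  · filter_upwards [hae] with x hx
    rw [Real.norm_eq_abs]
    exact f_lip hs x c p (hbd x hx) hc hp

lemma gnD_lip {d : ℕ} {r s : ℝ} (hs : 0 < s) {Ω : Type*}
    (X : ℕ → Ω → EuclideanSpace ℝ (Fin d)) (n : ℕ) (ω : Ω)
    {K R : ℝ} (hx : ∀ i, ‖X i ω‖ ≤ K)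
    (c p : EuclideanSpace ℝ (Fin d)) (hc : ‖c‖ ≤ R) (hp : ‖p‖ ≤ R) :
    |gnD r s X n c ω - gnD r s X n p ω| ≤ (2*(K+R)/s) * ‖c - p‖ := by
  have hL : 0 ≤ (2*(K+R)/s) * ‖c - p‖ := by
    have hK : 0 ≤ K := (norm_nonneg (X 0 ω)).trans (hx 0)
    have hR : 0 ≤ R := (norm_nonneg c).trans hc
    positivity
  rcases Nat.eq_zero_or_pos n with h | h
  · unfold gnD; simp [h]; exact hL
  · have hn : (0:ℝ) < n := by exact_mod_cast h
    unfold gnD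
    rw [← mul_sub, ← Finset.sum_sub_distrib, abs_mul, abs_of_nonneg (by positivity : (0:ℝ) ≤ ((n:ℝ))⁻¹)]
    calc ((n:ℝ))⁻¹ * |∑ i ∈ Finset.range n, (fD r s c (X i ω) - fD r s p (X i ω))|
        ≤ ((n:ℝ))⁻¹ * ∑ i ∈ Finset.range n, |fD r s c (X i ω) - fD r s p (X i ω)| := by
          apply mul_le_mul_of_nonneg_left (Finset.abs_sum_le_sum_abs _ _) (by positivity)
    _ ≤ ((n:ℝ))⁻¹ * ∑ _i ∈ Finset.range n, ((2*(K+R)/s) * ‖c - p‖) := by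
          apply mul_le_mul_of_nonneg_left _ (by positivity)
          exact Finset.sum_le_sum fun i _ => f_lip hs (X i ω) c p (hx i) hc hp
    _ = (2*(K+R)/s) * ‖c - p‖ := by
          rw [Finset.sum_const, Finset.card_range, nsmul_eq_mul]
          field_simp

lemma tail_bound {d : ℕ} (r s : ℝ) {Ω : Type*} [MeasurableSpace Ω] (P : Measure Ω)
    [IsProbabilityMeasure P] (X : ℕ → Ω → EuclideanSpace ℝ (Fin d))
    (hXmeas : ∀ i, Measurable (X i))
    (μ : Measure (EuclideanSpace ℝ (Fin d))) [IsProbabilityMeasure μ]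
    (hXlaw : ∀ i, P.map (X i) = μ)
    (hXindep : iIndepFun X P)
    (c : EuclideanSpace ℝ (Fin d)) (n : ℕ) (hn : 0 < n) {t : ℝ} (ht0 : 0 ≤ t) (ht1 : t ≤ 1) :
    (P {ω | t < |gnD r s X n c ω - mD r s μ c|}).toReal
      ≤ 2 * Real.exp (-(n:ℝ) * t^2 / 4) := by
  set Z : ℕ → Ω → ℝ := fun i ω => fD r s c (X i ω) - mD r s μ c with hZ
  have hZmeas : ∀ i, Measurable (Z i) :=
    fun i => (((fD_cont r s c).measurable).comp (hXmeas i)).sub measurable_const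
  have hZindep : iIndepFun Z P := by
    have := hXindep.comp (fun _ => fun x => fD r s c x - mD r s μ c)
      (fun _ => ((fD_cont r s c).measurable).sub measurable_const)
    exact this
  have hZbd : ∀ i ω, |Z i ω| ≤ 1 := by
    intro i ω
    rw [hZ, abs_le]
    constructor
    · simp only
      linarith [fD_nonneg r s c (X i ω), mD_le_one r s μ c]
    · simp only
      linarith [fD_le_one r s c (X i ω), mD_nonneg r s μ c]
  have hZmean : ∀ i, ∫ ω, Z i ω ∂P = 0 := by
    intro i
    rw [hZ]
    simp only
    rw [integral_sub _ (integrable_const _)]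
    · have : ∫ ω, fD r s c (X i ω) ∂P = mD r s μ c := by
        have h1 : ∫ ω, fD r s c (X i ω) ∂P = ∫ x, fD r s c x ∂(P.map (X i)) :=
          (integral_map (hXmeas i).aemeasurable (fD_cont r s c).aestronglyMeasurable).symm
        rw [h1, hXlaw i]; rfl
      rw [this]
      simp
    · refine (integrable_const (1:ℝ)).mono'
        (((fD_cont r s c).measurable.comp (hXmeas i)).aestronglyMeasurable)
        (Filter.Eventually.of_forall fun ω => ?_)
      rw [Real.norm_eq_abs, abs_of_nonneg (fD_nonneg r s c _)]
      exact fD_le_one r s c _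
  have hsub : {ω | t < |gnD r s X n c ω - mD r s μ c|}
      ⊆ {ω | (n:ℝ) * t ≤ |∑ i ∈ Finset.range n, Z i ω|} := by
    intro ω hω
    simp only [Set.mem_setOf_eq] at hω ⊢
    have hnr : (0:ℝ) < n := by exact_mod_cast hn
    have he : gnD r s X n c ω - mD r s μ c = (n:ℝ)⁻¹ * ∑ i ∈ Finset.range n, Z i ω := by
      rw [hZ]
      unfold gnD
      rw [Finset.sum_sub_distrib, Finset.sum_const, Finset.card_range, nsmul_eq_mul]
      field_simp
    rw [he, abs_mul, abs_of_nonneg (by positivity : (0:ℝ) ≤ ((n:ℝ))⁻¹),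
      inv_mul_eq_div, lt_div_iff₀ hnr] at hω
    nlinarith
  calc (P {ω | t < |gnD r s X n c ω - mD r s μ c|}).toReal
      ≤ (P {ω | (n:ℝ) * t ≤ |∑ i ∈ Finset.range n, Z i ω|}).toReal := by
        apply ENNReal.toReal_mono (measure_ne_top _ _) (measure_mono hsub)
  _ ≤ 2 * Real.exp (-(n:ℝ) * t^2 / 4) :=
      hoeffding_abs Z hZmeas hZindep hZbd hZmean n ht0 ht1


end SD_aux

open MeasureTheory in
open ProbabilityTheory in
set_option maxHeartbeats 4000000 in
open ProbabilityTheory in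
/-- For `μ` absolutely continuous with bounded support, the expected uniform deviation of
the empirical sphere depth over the support is `O(log n / √n)`. -/
theorem stmt_18 (d : ℕ) (μ : Measure (EuclideanSpace ℝ (Fin d))) [IsProbabilityMeasure μ]
    (habs : μ ≪ volume) (hbdd : Bornology.IsBounded (msupport μ))
    (r s : ℝ) (hr : 0 < r) (hs : 0 < s)
    {Ω : Type*} [MeasurableSpace Ω] (P : Measure Ω) [IsProbabilityMeasure P]
    (X : ℕ → Ω → EuclideanSpace ℝ (Fin d))
    (hXmeas : ∀ i, Measurable (X i)) (hXlaw : ∀ i, P.map (X i) = μ)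
    (hXindep : iIndepFun X P) :
    ∃ C > (0 : ℝ), ∀ n : ℕ, 2 ≤ n →
      (∫ ω, (⨆ z : msupport μ,
          |SDemp d r s (z : EuclideanSpace ℝ (Fin d)) n (fun i : Fin n => X i ω) -
            SDs d r s (z : EuclideanSpace ℝ (Fin d)) μ|) ∂P) ≤
        C * Real.log n / Real.sqrt n := by
  classical
  have hlog2 : 0 < Real.log 2 := Real.log_pos one_lt_two
  rcases Nat.eq_zero_or_pos d with hd0 | hd
  · -- degenerate case d = 0 : the sphere is empty and both depths vanish
    subst hd0
    refine ⟨1, one_pos, fun n hn => ?_⟩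
    have hn1 : (1:ℝ) ≤ n := by
      have : (2:ℝ) ≤ n := by exact_mod_cast hn
      linarith
    have hempty : ∀ z : EuclideanSpace ℝ (Fin 0), IsEmpty (Metric.sphere z r) := by
      intro z
      constructor
      rintro ⟨c, hc⟩
      rw [Metric.mem_sphere] at hc
      have hdz : dist c z = 0 := by
        rw [EuclideanSpace.dist_eq]
        simp
      rw [hdz] at hc
      exact absurd hc.symm (ne_of_gt hr)
    have hzero : ∀ ω : Ω, (⨆ z : msupport μ,
        |SDemp 0 r s (↑z) n (fun i : Fin n => X i ω) - SDs 0 r s (↑z) μ|) = 0 := by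
      intro ω
      apply le_antisymm
      · apply Real.iSup_le _ le_rfl
        intro z
        haveI := hempty (↑z : EuclideanSpace ℝ (Fin 0))
        have h1 : SDemp 0 r s (↑z) n (fun i : Fin n => X i ω) = 0 := by
          unfold SDemp
          exact Real.iInf_of_isEmpty _
        have h2 : SDs 0 r s (↑z) μ = 0 := by
          unfold SDs
          exact Real.iInf_of_isEmpty _
        rw [h1, h2, sub_zero, abs_zero]
      · exact Real.iSup_nonneg fun z => abs_nonneg _
    simp only [hzero, integral_zero]
    apply div_nonneg _ (Real.sqrt_nonneg _)
    rw [one_mul]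
    exact Real.log_nonneg hn1
  · -- main case d ≥ 1
    obtain ⟨K₀, hK₀⟩ := hbdd.subset_closedBall 0
    set K : ℝ := max K₀ 1 with hKdef
    have hK1 : (1:ℝ) ≤ K := le_max_right _ _
    have hKpos : (0:ℝ) < K := lt_of_lt_of_le one_pos hK1
    have hKbd : ∀ x ∈ msupport μ, ‖x‖ ≤ K := by
      intro x hx
      have h1 := hK₀ hx
      rw [Metric.mem_closedBall, dist_zero_right] at h1
      exact h1.trans (le_max_left _ _)
    set R : ℝ := K + r + 1 with hRdef
    have hRpos : 0 < R := by rw [hRdef]; linarith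
    set L : ℝ := 2*(K+R)/s with hLdef
    have hLpos : 0 < L := by
      rw [hLdef]; apply div_pos _ hs; nlinarith
    set B : ℝ := 2*(K+r)*Real.sqrt d/1 + 5 with hBdef
    have hB1 : 1 ≤ B := by
      have h1 : (0:ℝ) ≤ 2*(K+r)*Real.sqrt d/1 := by positivity
      rw [hBdef]; linarith
    set A : ℝ := d * (Real.log B / Real.log 2 + 1) with hAdef
    have hA0 : 0 ≤ A := by
      have h1 : 0 ≤ Real.log B := Real.log_nonneg hB1
      have h2 : 0 ≤ Real.log B / Real.log 2 := div_nonneg h1 hlog2.le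
      rw [hAdef]
      apply mul_nonneg (Nat.cast_nonneg d)
      linarith
    set q : ℝ := 2 * Real.sqrt (A + 2) with hqdef
    have hqpos : 0 < q := by
      rw [hqdef]
      exact mul_pos two_pos (Real.sqrt_pos.mpr (by linarith))
    set C : ℝ := 2*L/Real.log 2 + q/Real.sqrt (Real.log 2) + 1/Real.log 2 + 1 with hCdef
    have hCpos : 0 < C := by
      have h1 : 0 ≤ 2*L/Real.log 2 := div_nonneg (by linarith) hlog2.le
      have h2 : 0 ≤ q/Real.sqrt (Real.log 2) := div_nonneg hqpos.le (Real.sqrt_nonneg _)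
      have h3 : 0 ≤ 1/Real.log 2 := by positivity
      rw [hCdef]; linarith
    refine ⟨C, hCpos, fun n hn => ?_⟩
    have hn2 : (2:ℝ) ≤ n := by exact_mod_cast hn
    have hnpos : (0:ℝ) < n := by linarith
    have hsnpos : 0 < Real.sqrt n := Real.sqrt_pos.mpr hnpos
    have hsn1 : 1 ≤ Real.sqrt n := by
      rw [show (1:ℝ) = Real.sqrt 1 from (Real.sqrt_one).symm]
      exact Real.sqrt_le_sqrt (by linarith)
    have hlogn : Real.log 2 ≤ Real.log n := Real.log_le_log (by norm_num) hn2
    have hlognpos : 0 < Real.log n := lt_of_lt_of_le hlog2 hlogn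
    set ε : ℝ := 1 / Real.sqrt n with hεdef
    have hεpos : 0 < ε := by rw [hεdef]; positivity
    have hε1 : ε ≤ 1 := by rw [hεdef, div_le_one hsnpos]; exact hsn1
    have hKrpos : (0:ℝ) < K + r := by linarith
    obtain ⟨T, hTcov, hTcard⟩ := net_exists d hd hKrpos hεpos
    set t : ℝ := q * Real.sqrt (Real.log n / n) with htdef
    have ht0 : 0 ≤ t := by rw [htdef]; positivity
    -- exponent identity
    have ht2 : -(n:ℝ) * t^2 / 4 = -((A + 2) * Real.log n) := by
      rw [htdef, mul_pow, Real.sq_sqrt (by positivity : (0:ℝ) ≤ Real.log n / n), hqdef,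
        mul_pow, Real.sq_sqrt (by linarith : (0:ℝ) ≤ A + 2)]
      field_simp
      ring
    -- cardinality bound
    have hcard : (T.card : ℝ) ≤ Real.exp (A * Real.log n) := by
      have h1 : (T.card : ℝ) ≤ (2*(K+r)*Real.sqrt d/ε + 5)^d := hTcard
      have h2 : 2*(K+r)*Real.sqrt d/ε + 5 ≤ B * Real.sqrt n := by
        rw [hεdef, hBdef]
        have h3 : 2*(K+r)*Real.sqrt d / (1 / Real.sqrt n) = (2*(K+r)*Real.sqrt d) * Real.sqrt n := by
          field_simp
        rw [h3]
        have h4 : (0:ℝ) ≤ 2*(K+r)*Real.sqrt d := by positivity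
        nlinarith
      have h5 : (T.card : ℝ) ≤ (B * Real.sqrt n)^d :=
        h1.trans (pow_le_pow_left₀ (by positivity) h2 d)
      have hBsn : B * Real.sqrt n = Real.exp (Real.log B + Real.log n / 2) := by
        rw [Real.exp_add, Real.exp_log (by linarith : (0:ℝ) < B)]
        congr 1
        rw [Real.sqrt_eq_rpow, Real.rpow_def_of_pos hnpos]
        congr 1
        ring
      have h6 : (B * Real.sqrt n)^d = Real.exp ((d:ℝ) * (Real.log B + Real.log n / 2)) := by
        rw [hBsn, ← Real.exp_nat_mul]
      have h7 : (d:ℝ) * (Real.log B + Real.log n / 2) ≤ A * Real.log n := by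
        have hlogB0 : 0 ≤ Real.log B := Real.log_nonneg hB1
        have h8 : Real.log B ≤ (Real.log B / Real.log 2) * Real.log n := by
          have h9 : (Real.log B / Real.log 2) * Real.log 2 ≤ (Real.log B / Real.log 2) * Real.log n :=
            mul_le_mul_of_nonneg_left hlogn (div_nonneg hlogB0 hlog2.le)
          rwa [div_mul_cancel₀ _ (ne_of_gt hlog2)] at h9
        have hd0 : (0:ℝ) ≤ d := Nat.cast_nonneg d
        rw [hAdef]
        nlinarith [hlognpos.le]
      calc (T.card : ℝ) ≤ (B * Real.sqrt n)^d := h5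
      _ = Real.exp ((d:ℝ) * (Real.log B + Real.log n / 2)) := h6
      _ ≤ Real.exp (A * Real.log n) := Real.exp_le_exp.mpr h7
    -- final arithmetic
    have e1 : 2*L*ε ≤ (2*L/Real.log 2) * (Real.log n / Real.sqrt n) := by
      rw [hεdef]
      rw [show 2*L*(1/Real.sqrt n) = (2*L)/Real.sqrt n by ring,
        show (2*L/Real.log 2) * (Real.log n / Real.sqrt n)
          = (2*L*Real.log n/Real.log 2)/Real.sqrt n by ring]
      have hnum : 2*L ≤ 2*L*Real.log n/Real.log 2 := by
        have h := mul_le_mul_of_nonneg_left hlogn (by linarith : (0:ℝ) ≤ 2*L)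
        rw [le_div_iff₀ hlog2]
        linarith
      gcongr
    have e2 : t ≤ (q/Real.sqrt (Real.log 2)) * (Real.log n / Real.sqrt n) := by
      have hslog2 : 0 < Real.sqrt (Real.log 2) := Real.sqrt_pos.mpr hlog2
      have hs1 : Real.sqrt (Real.log 2) * Real.sqrt (Real.log n) ≤ Real.log n := by
        have h := Real.mul_self_sqrt hlognpos.le
        have h2 : Real.sqrt (Real.log 2) ≤ Real.sqrt (Real.log n) := Real.sqrt_le_sqrt hlogn
        nlinarith [Real.sqrt_nonneg (Real.log n)]
      rw [htdef, Real.sqrt_div hlognpos.le]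
      rw [show q * (Real.sqrt (Real.log n)/Real.sqrt n)
          = (q * Real.sqrt (Real.log n))/Real.sqrt n by ring,
        show (q/Real.sqrt (Real.log 2)) * (Real.log n / Real.sqrt n)
          = (q * Real.log n/Real.sqrt (Real.log 2))/Real.sqrt n by ring]
      have hnum : q * Real.sqrt (Real.log n) ≤ q * Real.log n/Real.sqrt (Real.log 2) := by
        rw [le_div_iff₀ hslog2]
        nlinarith [Real.sqrt_nonneg (Real.log n), hqpos.le]
      gcongr
    have e3 : 1/(n:ℝ) ≤ (1/Real.log 2) * (Real.log n / Real.sqrt n) := by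
      have hsqn : Real.sqrt n ≤ n := by
        have h1 : Real.sqrt n ≤ Real.sqrt ((n:ℝ)^2) := Real.sqrt_le_sqrt (by nlinarith)
        rwa [Real.sqrt_sq hnpos.le] at h1
      have h2 : 1/(n:ℝ) ≤ 1/Real.sqrt n := by
        apply one_div_le_one_div_of_le hsnpos hsqn
      have h3 : (1:ℝ) ≤ Real.log n/Real.log 2 := by
        rw [le_div_iff₀ hlog2]; linarith
      have h4 : 1/Real.sqrt n ≤ (Real.log n/Real.log 2)/Real.sqrt n := by
        gcongr
      calc 1/(n:ℝ) ≤ 1/Real.sqrt n := h2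
      _ ≤ (Real.log n/Real.log 2)/Real.sqrt n := h4
      _ = (1/Real.log 2) * (Real.log n / Real.sqrt n) := by ring
    -- the bad event
    set Bad : Set Ω := ⋃ c ∈ T, {ω | t < |gnD r s X n c ω - mD r s μ c|} with hBadDef
    have hBadMeas : MeasurableSet Bad := by
      apply Set.Finite.measurableSet_biUnion T.finite_toSet
      intro c _
      exact measurableSet_lt measurable_const
        (((gnD_meas r s X hXmeas n c).sub measurable_const).abs)
    -- almost surely all samples are in the support
    have haeX : ∀ᵐ ω ∂P, ∀ i, X i ω ∈ msupport μ := by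
      rw [ae_all_iff]
      intro i
      have hms : MeasurableSet (msupport μ)ᶜ := (msupport_isOpen_compl μ).measurableSet
      rw [ae_iff]
      have he : {ω | ¬ X i ω ∈ msupport μ} = X i ⁻¹' (msupport μ)ᶜ := rfl
      rw [he, ← Measure.map_apply (hXmeas i) hms, hXlaw i]
      exact msupport_compl_null μ
    -- deterministic estimate off the bad event
    have hdet : ∀ ω, (∀ i, X i ω ∈ msupport μ) → ω ∉ Bad →
        ∀ z : msupport μ,
          |SDemp d r s (↑z) n (fun i : Fin n => X i ω) - SDs d r s (↑z) μ| ≤ 2*L*ε + t := by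
      intro ω hω hbad z
      rw [SDemp_eq d r s (↑z) n X ω, SDs_eq]
      haveI := sphere_nonempty_of_dim_pos hd hr (↑z : EuclideanSpace ℝ (Fin d))
      apply abs_ciInf_sub_ciInf (ι := ↥(Metric.sphere (↑z : EuclideanSpace ℝ (Fin d)) r))
        (F := fun c => gnD r s X n (↑c) ω) (G := fun c => mD r s μ (↑c))
        (fun c => gnD_nonneg r s X n (↑c) ω) (fun c => mD_nonneg r s μ (↑c))
      intro c
      have hzK : ‖(↑z : EuclideanSpace ℝ (Fin d))‖ ≤ K := hKbd _ z.2
      have hcz : dist (↑c : EuclideanSpace ℝ (Fin d)) (↑z) = r := Metric.mem_sphere.mp c.2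
      have hcnorm : ‖(↑c : EuclideanSpace ℝ (Fin d))‖ ≤ K + r := by
        have he : (↑c : EuclideanSpace ℝ (Fin d))
            = ((↑c : EuclideanSpace ℝ (Fin d)) - ↑z) + ↑z := by abel
        calc ‖(↑c : EuclideanSpace ℝ (Fin d))‖
            ≤ ‖(↑c : EuclideanSpace ℝ (Fin d)) - ↑z‖ + ‖(↑z : EuclideanSpace ℝ (Fin d))‖ := by
              nth_rewrite 1 [he]; exact norm_add_le _ _
        _ ≤ K + r := by rw [← dist_eq_norm, hcz]; linarith
      obtain ⟨p, hpT, hpc⟩ := hTcov _ hcnorm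
      have hcR : ‖(↑c : EuclideanSpace ℝ (Fin d))‖ ≤ R := by rw [hRdef]; linarith
      have hpR : ‖p‖ ≤ R := by
        have h1 : ‖p‖ ≤ ‖p - (↑c : EuclideanSpace ℝ (Fin d))‖ + ‖(↑c : EuclideanSpace ℝ (Fin d))‖ := by
          have he : p = (p - (↑c : EuclideanSpace ℝ (Fin d))) + ↑c := by abel
          nth_rewrite 1 [he]; exact norm_add_le _ _
        have h2 : ‖p - (↑c : EuclideanSpace ℝ (Fin d))‖ ≤ ε := by
          rw [norm_sub_rev]; exact hpc
        rw [hRdef]; linarith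
      have h1 : |gnD r s X n (↑c) ω - gnD r s X n p ω| ≤ L * ε := by
        refine (gnD_lip hs X n ω (fun i => hKbd _ (hω i)) _ p hcR hpR).trans ?_
        rw [← hLdef]
        exact mul_le_mul_of_nonneg_left hpc hLpos.le
      have h2 : |mD r s μ (↑c) - mD r s μ p| ≤ L * ε := by
        refine (mD_lip hs μ hKbd _ p hcR hpR).trans ?_
        rw [← hLdef]
        exact mul_le_mul_of_nonneg_left hpc hLpos.le
      have h3 : |gnD r s X n p ω - mD r s μ p| ≤ t := by
        by_contra hcon
        push_neg at hcon
        exact hbad (Set.mem_biUnion hpT hcon)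
      have h4 := abs_sub_le (gnD r s X n (↑c) ω) (gnD r s X n p ω) (mD r s μ (↑c))
      have h5 := abs_sub_le (gnD r s X n p ω) (mD r s μ p) (mD r s μ (↑c))
      have h6 : |mD r s μ p - mD r s μ (↑c)| ≤ L * ε := by rwa [abs_sub_comm] at h2
      linarith
    -- crude bound by one
    have hone : ∀ ω, ∀ z : msupport μ,
        |SDemp d r s (↑z) n (fun i : Fin n => X i ω) - SDs d r s (↑z) μ| ≤ 1 := by
      intro ω z
      rw [SDemp_eq d r s (↑z) n X ω, SDs_eq]
      haveI := sphere_nonempty_of_dim_pos hd hr (↑z : EuclideanSpace ℝ (Fin d))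
      exact abs_ciInf_sub_ciInf (ι := ↥(Metric.sphere (↑z : EuclideanSpace ℝ (Fin d)) r))
        (F := fun c => gnD r s X n (↑c) ω) (G := fun c => mD r s μ (↑c))
        (fun c => gnD_nonneg r s X n (↑c) ω) (fun c => mD_nonneg r s μ (↑c))
        (fun c => abs_gnD_sub_mD_le_one r s X μ n (↑c) ω)
    -- integral bound via the measurable majorant
    have hkey : (∫ ω, (⨆ z : msupport μ,
          |SDemp d r s (↑z) n (fun i : Fin n => X i ω) - SDs d r s (↑z) μ|) ∂P)
        ≤ (2*L*ε + t) + (P Bad).toReal := by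
      have hIind : Integrable (fun ω => Set.indicator Bad (fun _ => (1:ℝ)) ω) P :=
        (integrable_const 1).indicator hBadMeas
      have hint : Integrable (fun ω => (2*L*ε + t) + Set.indicator Bad (fun _ => (1:ℝ)) ω) P :=
        (integrable_const _).add hIind
      have hmono : ∀ᵐ ω ∂P, (⨆ z : msupport μ,
          |SDemp d r s (↑z) n (fun i : Fin n => X i ω) - SDs d r s (↑z) μ|)
            ≤ (2*L*ε + t) + Set.indicator Bad (fun _ => (1:ℝ)) ω := by
        filter_upwards [haeX] with ω hω
        have hLε : 0 ≤ 2*L*ε + t := by positivity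
        by_cases hb : ω ∈ Bad
        · rw [Set.indicator_of_mem hb]
          apply Real.iSup_le _ (by linarith)
          intro z
          linarith [hone ω z]
        · rw [Set.indicator_of_notMem hb, add_zero]
          exact Real.iSup_le (fun z => hdet ω hω hb z) hLε
      calc (∫ ω, (⨆ z : msupport μ,
          |SDemp d r s (↑z) n (fun i : Fin n => X i ω) - SDs d r s (↑z) μ|) ∂P)
          ≤ ∫ ω, ((2*L*ε + t) + Set.indicator Bad (fun _ => (1:ℝ)) ω) ∂P := by
            apply integral_mono_of_nonneg _ hint hmono
            exact Filter.Eventually.of_forall fun ω => Real.iSup_nonneg fun z => abs_nonneg _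
      _ = (2*L*ε + t) + (P Bad).toReal := by
          rw [integral_add (integrable_const _) hIind, integral_const, integral_indicator_const _ hBadMeas]
          simp
          rfl
    -- bound on the probability of the bad event
    have hPBad : (P Bad).toReal ≤ 1/(n:ℝ) := by
      by_cases ht1 : t ≤ 1
      · have hsum : (P Bad).toReal
            ≤ ∑ c ∈ T, (P {ω | t < |gnD r s X n c ω - mD r s μ c|}).toReal := by
          have hle : P Bad ≤ ∑ c ∈ T, P {ω | t < |gnD r s X n c ω - mD r s μ c|} := by
            rw [hBadDef]
            exact measure_biUnion_finset_le T _
          have hnetop : (∑ c ∈ T, P {ω | t < |gnD r s X n c ω - mD r s μ c|}) ≠ ⊤ :=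
            (ENNReal.sum_lt_top.mpr fun c _ => measure_lt_top P _).ne
          calc (P Bad).toReal
              ≤ (∑ c ∈ T, P {ω | t < |gnD r s X n c ω - mD r s μ c|}).toReal :=
                ENNReal.toReal_mono hnetop hle
          _ = ∑ c ∈ T, (P {ω | t < |gnD r s X n c ω - mD r s μ c|}).toReal :=
                ENNReal.toReal_sum fun c _ => measure_ne_top P _
        have heach : ∀ c ∈ T, (P {ω | t < |gnD r s X n c ω - mD r s μ c|}).toReal
            ≤ 2 * Real.exp (-(n:ℝ) * t^2 / 4) := fun c _ =>
          tail_bound r s P X hXmeas μ hXlaw hXindep c n (by omega) ht0 ht1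
        have hsum2 : ∑ c ∈ T, (P {ω | t < |gnD r s X n c ω - mD r s μ c|}).toReal
            ≤ (T.card : ℝ) * (2 * Real.exp (-(n:ℝ) * t^2 / 4)) := by
          calc ∑ c ∈ T, (P {ω | t < |gnD r s X n c ω - mD r s μ c|}).toReal
              ≤ ∑ _c ∈ T, 2 * Real.exp (-(n:ℝ) * t^2 / 4) := Finset.sum_le_sum heach
          _ = (T.card : ℝ) * (2 * Real.exp (-(n:ℝ) * t^2 / 4)) := by
              rw [Finset.sum_const, nsmul_eq_mul]
        have hfinal : (T.card : ℝ) * (2 * Real.exp (-(n:ℝ) * t^2 / 4)) ≤ 2/(n:ℝ)^2 := by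
          rw [ht2]
          calc (T.card : ℝ) * (2 * Real.exp (-((A+2) * Real.log n)))
              ≤ Real.exp (A * Real.log n) * (2 * Real.exp (-((A+2) * Real.log n))) := by
                apply mul_le_mul_of_nonneg_right hcard (by positivity)
          _ = 2 * Real.exp (A * Real.log n + -((A+2) * Real.log n)) := by
                rw [Real.exp_add]; ring
          _ = 2 * Real.exp (-(2 * Real.log n)) := by ring_nf
          _ = 2 / (n:ℝ)^2 := by
                rw [Real.exp_neg]
                rw [show (2:ℝ) * Real.log n = Real.log n + Real.log n by ring, Real.exp_add,
                  Real.exp_log hnpos]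
                rw [eq_div_iff (by positivity)]
                field_simp
        have h2n : 2/(n:ℝ)^2 ≤ 1/(n:ℝ) := by
          rw [div_le_div_iff₀ (by positivity) hnpos]
          nlinarith
        linarith
      · -- t > 1 : the bad event is empty
        have hBe : Bad = ∅ := by
          rw [hBadDef]
          apply Set.eq_empty_iff_forall_notMem.mpr
          intro ω hω
          simp only [Set.mem_iUnion] at hω
          obtain ⟨c, hc, hω2⟩ := hω
          simp only [Set.mem_setOf_eq] at hω2
          have := abs_gnD_sub_mD_le_one r s X μ n c ω
          push_neg at ht1
          linarith
        rw [hBe]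
        simp only [measure_empty, ENNReal.toReal_zero]
        positivity
    calc (∫ ω, (⨆ z : msupport μ,
          |SDemp d r s (↑z) n (fun i : Fin n => X i ω) - SDs d r s (↑z) μ|) ∂P)
        ≤ (2*L*ε + t) + (P Bad).toReal := hkey
    _ ≤ (2*L*ε + t) + 1/(n:ℝ) := by linarith
    _ ≤ (2*L/Real.log 2)*(Real.log n/Real.sqrt n)
        + (q/Real.sqrt (Real.log 2))*(Real.log n/Real.sqrt n)
        + (1/Real.log 2)*(Real.log n/Real.sqrt n) := by linarith
    _ ≤ C * Real.log n / Real.sqrt n := by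
        rw [hCdef]
        have h0 : (0:ℝ) ≤ Real.log n/Real.sqrt n := by positivity
        rw [show (2*L/Real.log 2 + q/Real.sqrt (Real.log 2) + 1/Real.log 2 + 1)
              * Real.log n / Real.sqrt n
            = (2*L/Real.log 2)*(Real.log n/Real.sqrt n)
              + (q/Real.sqrt (Real.log 2))*(Real.log n/Real.sqrt n)
              + (1/Real.log 2)*(Real.log n/Real.sqrt n)
              + 1*(Real.log n/Real.sqrt n) by ring]
        linarith
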